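/- Let A, j*, d, the sets P_0,…,P_d and the numbers b_{l,k} be as in the context. Let B_1,…,B_n be positive definite m×m matrices and, for z = col{v_1,…,v_n} ∈ ℝ^{mn} with v_i ∈ ℝ^m, define Q_0(z) = diag{(B_i^{-1} + v_i v_iᵀ)^{-1} B_i^{-1} : i = 1,…,n}. Fix C ∈ ℝ^{mn}. Then: (i) for each l ∈ {0,…,d−1}, if C ∉ P_{l+1}, then for every nonempty open set U ⊆ ℝ^{mn} there exists z ∈ U with (A⊗I_m)(Q_0(z)C) ∉ P_l; (ii) if C ∉ P_0, then for every nonempty open set U ⊆ ℝ^{mn} there exists z ∈ U with (A⊗I_m)(Q_0(z)C) ∉ P_d. -/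

import Mathlib

open BigOperators Matrix

section Aux
variable {m : ℕ}

lemma mul_vecMulVec' (M : Matrix (Fin m) (Fin m) ℝ) (a b : Fin m → ℝ) :
    M * vecMulVec a b = vecMulVec (M.mulVec a) b := by
  ext i j
  simp only [Matrix.mul_apply, vecMulVec_apply, Matrix.mulVec, dotProduct, Finset.sum_mul]
  exact Finset.sum_congr rfl fun k _ => by ring

lemma vecMulVec_mul' (a b : Fin m → ℝ) (M : Matrix (Fin m) (Fin m) ℝ) :
    vecMulVec a b * M = vecMulVec a (b ᵥ* M) := by
  ext i j
  simp only [Matrix.mul_apply, vecMulVec_apply, Matrix.vecMul, dotProduct, Finset.mul_sum]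
  exact Finset.sum_congr rfl fun k _ => by ring

lemma vecMulVec_mulVec' (a b x : Fin m → ℝ) :
    (vecMulVec a b).mulVec x = (b ⬝ᵥ x) • a := by
  ext i
  simp only [Matrix.mulVec, dotProduct, vecMulVec_apply, Pi.smul_apply, smul_eq_mul,
    Finset.mul_sum]
  rw [Finset.sum_mul]
  exact Finset.sum_congr rfl fun k _ => by ring

lemma smul_vecMulVec (c : ℝ) (a b : Fin m → ℝ) :
    vecMulVec (c • a) b = c • vecMulVec a b := by
  ext i j; simp [vecMulVec_apply, mul_assoc]

lemma dot_nonneg {B : Matrix (Fin m) (Fin m) ℝ} (hB : B.PosDef) (v : Fin m → ℝ) :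
    0 ≤ v ⬝ᵥ B.mulVec v := by
  simpa using hB.posSemidef.re_dotProduct_nonneg v

lemma sherman (B : Matrix (Fin m) (Fin m) ℝ) (hB : B.PosDef) (v C : Fin m → ℝ) :
    ((B⁻¹ + vecMulVec v v)⁻¹ * B⁻¹).mulVec C
      = C - ((v ⬝ᵥ C) / (1 + v ⬝ᵥ B.mulVec v)) • B.mulVec v := by
  have hdet : IsUnit B.det := isUnit_iff_ne_zero.mpr (ne_of_gt hB.det_pos)
  have hnn := dot_nonneg hB v
  have hs0 : (1 + v ⬝ᵥ B.mulVec v) ≠ 0 := by linarith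
  have hsym : Bᵀ = B := by
    rw [← Matrix.conjTranspose_eq_transpose_of_trivial]; exact hB.isHermitian
  set s := 1 + v ⬝ᵥ B.mulVec v with hsdef
  have hvB : v ᵥ* B = B *ᵥ v := by conv_lhs => rw [← hsym, vecMul_transpose]
  have hright : (B⁻¹ + vecMulVec v v) * (B - s⁻¹ • vecMulVec (B.mulVec v) (B.mulVec v)) = 1 := by
    have h1 : B⁻¹ * B = 1 := nonsing_inv_mul B hdet
    have h2 : B⁻¹ * vecMulVec (B.mulVec v) (B.mulVec v) = vecMulVec v (B.mulVec v) := by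
      rw [mul_vecMulVec', mulVec_mulVec, h1, one_mulVec]
    have h3 : vecMulVec v v * B = vecMulVec v (B.mulVec v) := by
      rw [vecMulVec_mul', hvB]
    have h4 : vecMulVec v v * vecMulVec (B.mulVec v) (B.mulVec v)
        = (v ⬝ᵥ B.mulVec v) • vecMulVec v (B.mulVec v) := by
      rw [mul_vecMulVec', vecMulVec_mulVec', smul_vecMulVec]
    rw [mul_sub, mul_smul_comm, add_mul, add_mul, h1, h2, h3, h4, smul_add, smul_smul,
      ← add_smul]
    have hc : s⁻¹ + s⁻¹ * (v ⬝ᵥ B.mulVec v) = 1 := by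
      rw [hsdef]; field_simp
    rw [hc, one_smul, add_sub_cancel_right]
  have hinv : (B⁻¹ + vecMulVec v v)⁻¹ = B - s⁻¹ • vecMulVec (B.mulVec v) (B.mulVec v) :=
    inv_eq_right_inv hright
  have h5 : vecMulVec (B.mulVec v) (B.mulVec v) * B⁻¹ = vecMulVec (B.mulVec v) v := by
    rw [vecMulVec_mul']
    rw [← mulVec_transpose, transpose_nonsing_inv, hsym, mulVec_mulVec, nonsing_inv_mul B hdet,
      one_mulVec]
  rw [hinv, sub_mul, Matrix.smul_mul, h5, Matrix.mul_nonsing_inv B hdet, sub_mulVec,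
    one_mulVec, smul_mulVec, vecMulVec_mulVec', smul_smul, div_eq_mul_inv, mul_comm]

lemma entry0 (B : Matrix (Fin m) (Fin m) ℝ) (hB : B.PosDef) (v C : Fin m → ℝ) (i : Fin m) :
    (((B⁻¹ + vecMulVec v v)⁻¹ * B⁻¹).mulVec C) i
      = C i - (v ⬝ᵥ C) * (B.mulVec v) i / (1 + v ⬝ᵥ B.mulVec v) := by
  have hnn := dot_nonneg hB v
  have hs0 : (1 + v ⬝ᵥ B.mulVec v) ≠ 0 := by linarith
  rw [sherman B hB v C]
  simp only [Pi.sub_apply, Pi.smul_apply, smul_eq_mul]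
  ring

lemma dense_ne {E : Type*} [NormedAddCommGroup E] [NormedSpace ℝ E] {φ : E → ℝ}
    (hφ : AnalyticOnNhd ℝ φ Set.univ) {z0 : E} (h0 : φ z0 ≠ 0)
    {U : Set E} (hU : IsOpen U) (hne : U.Nonempty) : ∃ z ∈ U, φ z ≠ 0 := by
  by_contra h
  push_neg at h
  obtain ⟨y, hy⟩ := hne
  have hev : φ =ᶠ[nhds y] 0 := Filter.eventually_of_mem (hU.mem_nhds hy) h
  have := hφ.eqOn_zero_of_preconnected_of_eventuallyEq_zero isPreconnected_univ
    (Set.mem_univ y) hev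
  exact h0 (this (Set.mem_univ z0))

lemma analytic_phi {n : ℕ} (B : Fin n → Matrix (Fin m) (Fin m) ℝ)
    (hB : ∀ j, (B j).PosDef) (C : Fin n → Fin m → ℝ) (c : Fin n → ℝ) (i0 : Fin m) :
    AnalyticOnNhd ℝ (fun z : Fin n → Fin m → ℝ =>
      ∑ j, c j * ((((B j)⁻¹ + vecMulVec (z j) (z j))⁻¹ * (B j)⁻¹).mulVec (C j)) i0)
      Set.univ := by
  have hfun : (fun z : Fin n → Fin m → ℝ =>
      ∑ j, c j * ((((B j)⁻¹ + vecMulVec (z j) (z j))⁻¹ * (B j)⁻¹).mulVec (C j)) i0)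
      = fun z => ∑ j, c j * (C j i0 -
          ((z j) ⬝ᵥ C j) * ((B j).mulVec (z j)) i0 / (1 + (z j) ⬝ᵥ (B j).mulVec (z j))) := by
    funext z
    exact Finset.sum_congr rfl fun j _ => by rw [entry0 _ (hB j)]
  rw [hfun]
  intro x _
  have hcoord : ∀ (j : Fin n) (i : Fin m),
      AnalyticAt ℝ (fun z : Fin n → Fin m → ℝ => z j i) x := by
    intro j i
    have h := (((ContinuousLinearMap.proj i : (Fin m → ℝ) →L[ℝ] ℝ).comp
      (ContinuousLinearMap.proj j : (Fin n → Fin m → ℝ) →L[ℝ] (Fin m → ℝ)))).analyticAt x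
    exact h
  have hdot : ∀ (j : Fin n) (w : Fin m → ℝ),
      AnalyticAt ℝ (fun z : Fin n → Fin m → ℝ => (z j) ⬝ᵥ w) x := by
    intro j w
    exact Finset.analyticAt_fun_sum _ fun i _ => (hcoord j i).mul analyticAt_const
  have hBv : ∀ (j : Fin n) (i : Fin m),
      AnalyticAt ℝ (fun z : Fin n → Fin m → ℝ => ((B j).mulVec (z j)) i) x := by
    intro j i
    show AnalyticAt ℝ (fun z : Fin n → Fin m → ℝ => ∑ k, B j i k * z j k) x
    exact Finset.analyticAt_fun_sum _ fun k _ => analyticAt_const.mul (hcoord j k)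
  have hq : ∀ j : Fin n,
      AnalyticAt ℝ (fun z : Fin n → Fin m → ℝ => (z j) ⬝ᵥ (B j).mulVec (z j)) x := by
    intro j
    exact Finset.analyticAt_fun_sum _ fun i _ => (hcoord j i).mul (hBv j i)
  apply Finset.analyticAt_fun_sum
  intro j _
  refine analyticAt_const.mul (analyticAt_const.sub (AnalyticAt.div ?_ ?_ ?_))
  · exact (hdot j (C j)).mul (hBv j i0)
  · exact analyticAt_const.add (hq j)
  · have := dot_nonneg (hB j) (x j)
    intro hcon
    linarith

end Aux

/-- **Lemma (moving a vector off the critical hyperplanes by one RLS-type step).**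
Let `A` be an `n×n` row-stochastic matrix, `j*` a fixed node, `d` the smallest
nonnegative integer with `(A^{d+1})[j*,j*] > 0`, and let `P_0,…,P_d ⊆ ℝ^{mn}` be the
critical hyperplanes built from the coefficients `b_{l,k}` (block vectors
`C : Fin n → Fin m → ℝ`; `C[m(k−1)+1]` is `C k 0`).  Let `B_1,…,B_n` be positive
definite `m×m` matrices and, for `z = col{v_1,…,v_n}`, let
`Q_0(z) = diag{(B_i⁻¹+v_iv_iᵀ)⁻¹B_i⁻¹}`.  Then for `C ∈ ℝ^{mn}`:
(i) for each `l ∈ {0,…,d−1}`, if `C ∉ P_{l+1}`, every nonempty open `U ⊆ ℝ^{mn}`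
contains `z` with `(A⊗I_m)(Q_0(z)C) ∉ P_l`;
(ii) if `C ∉ P_0`, every nonempty open `U` contains `z` with
`(A⊗I_m)(Q_0(z)C) ∉ P_d`. -/
theorem diffusion_RLS_hyperplane_escape_lemma
    {n m : ℕ} (hn : 1 ≤ n) (hm : 0 < m)
    (A : Matrix (Fin n) (Fin n) ℝ)
    (hA_nonneg : ∀ i j, 0 ≤ A i j)
    (hA_row : ∀ i, ∑ j, A i j = 1)
    (js : Fin n)
    (d : ℕ) (hd : 0 < (A ^ (d + 1)) js js)
    (hd_min : ∀ e, e < d → ¬ 0 < (A ^ (e + 1)) js js)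
    (b : ℕ → Fin n → ℝ)
    (hb1 : ∀ k, b 1 k = if k = js then 0 else A js k)
    (hbsucc : ∀ l k, 1 ≤ l → b (l + 1) k = ∑ i, b l i * A i k)
    (Pset : ℕ → Set (Fin n → Fin m → ℝ))
    (hP0 : Pset 0 = {C | C js ⟨0, hm⟩ = 0})
    (hPl : ∀ l, 1 ≤ l → Pset l = {C | ∑ k, b l k * C k ⟨0, hm⟩ = 0})
    (B : Fin n → Matrix (Fin m) (Fin m) ℝ)
    (hB : ∀ i, (B i).PosDef)
    (C : Fin n → Fin m → ℝ) :
    (∀ l, l < d → C ∉ Pset (l + 1) →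
      ∀ U : Set (Fin n → Fin m → ℝ), IsOpen U → U.Nonempty →
        ∃ z ∈ U,
          (fun i a => ∑ j, A i j *
              ((((B j)⁻¹ + Matrix.vecMulVec (z j) (z j))⁻¹ * (B j)⁻¹).mulVec (C j)) a)
            ∉ Pset l) ∧
    (C ∉ Pset 0 →
      ∀ U : Set (Fin n → Fin m → ℝ), IsOpen U → U.Nonempty →
        ∃ z ∈ U,
          (fun i a => ∑ j, A i j *
              ((((B j)⁻¹ + Matrix.vecMulVec (z j) (z j))⁻¹ * (B j)⁻¹).mulVec (C j)) a)
            ∉ Pset d) := by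
  -- the scalar value of each block after one step
  set i0 : Fin m := ⟨0, hm⟩ with hi0
  set G : (Fin n → Fin m → ℝ) → Fin n → ℝ := fun z j =>
    ((((B j)⁻¹ + Matrix.vecMulVec (z j) (z j))⁻¹ * (B j)⁻¹).mulVec (C j)) i0 with hG
  -- generic density statement
  have main : ∀ c : Fin n → ℝ, (∃ z0, ∑ j, c j * G z0 j ≠ 0) →
      ∀ U : Set (Fin n → Fin m → ℝ), IsOpen U → U.Nonempty →
        ∃ z ∈ U, ∑ j, c j * G z j ≠ 0 := by
    rintro c ⟨z0, h0⟩ U hU hne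
    exact dense_ne (analytic_phi B hB C c i0) h0 hU hne
  have G0 : ∀ (z : Fin n → Fin m → ℝ) (j : Fin n), z j = 0 → G z j = C j i0 := by
    intro z j hzj
    rw [hG]
    simp only [hzj]
    rw [entry0 _ (hB j)]
    simp
  -- b in terms of matrix powers
  have hbpow : ∀ l k, b (l + 1) k = (A ^ (l + 1)) js k - A js js * (A ^ l) js k := by
    intro l
    induction l with
    | zero =>
      intro k
      rw [hb1 k, pow_one, pow_zero]
      by_cases hk : k = js
      · subst hk; simp [Matrix.one_apply]
      · simp [hk, Matrix.one_apply_ne (Ne.symm hk)]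
    | succ l ih =>
      intro k
      rw [hbsucc (l + 1) k (by omega)]
      have : ∀ i, b (l + 1) i * A i k
          = (A ^ (l + 1)) js i * A i k - A js js * ((A ^ l) js i * A i k) := by
        intro i; rw [ih i]; ring
      rw [Finset.sum_congr rfl fun i _ => this i, Finset.sum_sub_distrib, ← Finset.mul_sum]
      congr 1
  -- the membership functional for levels ≥ 1
  have memfun : ∀ (z : Fin n → Fin m → ℝ) (l : ℕ), 1 ≤ l →
      ∑ k, b l k * (∑ j, A k j * G z j) = ∑ j, b (l + 1) j * G z j := by
    intro z l hl
    simp_rw [Finset.mul_sum]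
    rw [Finset.sum_comm]
    refine Finset.sum_congr rfl fun j _ => ?_
    rw [hbsucc l j hl, Finset.sum_mul]
    exact Finset.sum_congr rfl fun k _ => by ring
  have hAjj0 : 0 < d → A js js = 0 := by
    intro h0d
    have := hd_min 0 h0d
    rw [pow_one] at this
    exact le_antisymm (not_lt.mp this) (hA_nonneg js js)
  -- existence of a nonvanishing point when c js ≠ 0 and C js i0 ≠ 0
  have exist_z0 : ∀ c : Fin n → ℝ, c js ≠ 0 → C js i0 ≠ 0 →
      ∃ z0, ∑ j, c j * G z0 j ≠ 0 := by
    intro c hcjs hCjs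
    set zt : ℝ → (Fin n → Fin m → ℝ) := fun t =>
      Function.update (0 : Fin n → Fin m → ℝ) js ((t • (Pi.single i0 1 : Fin m → ℝ))) with hzt
    have hB00 : 0 < B js i0 i0 := by
      have hx : (Pi.single i0 1 : Fin m → ℝ) ≠ 0 := by
        intro h
        have := congrFun h i0
        simp at this
      have := (hB js).re_dotProduct_pos hx
      simpa [single_dotProduct, Matrix.mulVec_single] using this
    have hGt : ∀ t : ℝ, G (zt t) js
        = C js i0 - (t * C js i0) * (t * B js i0 i0) / (1 + t * (t * B js i0 i0)) := by
      intro t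
      have hv : zt t js = t • (Pi.single i0 1 : Fin m → ℝ) := by
        rw [hzt]; simp
      rw [hG]
      simp only [hv]
      rw [entry0 _ (hB js)]
      have h1 : (t • (Pi.single i0 1 : Fin m → ℝ)) ⬝ᵥ C js = t * C js i0 := by
        rw [smul_dotProduct, single_dotProduct]; simp
      have h2 : ((B js).mulVec (t • (Pi.single i0 1 : Fin m → ℝ))) = t • fun i => B js i i0 * 1 := by
        rw [Matrix.mulVec_smul, Matrix.mulVec_single]; ext i; simp
      have h3 : (t • (Pi.single i0 1 : Fin m → ℝ)) ⬝ᵥ ((B js).mulVec (t • (Pi.single i0 1 : Fin m → ℝ)))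
          = t * (t * B js i0 i0) := by
        rw [h2, smul_dotProduct, single_dotProduct]
        simp [mul_assoc]
      rw [h1, h3, h2]
      simp
    have hsum : ∀ t : ℝ, ∑ j, c j * G (zt t) j
        = c js * G (zt t) js + ∑ j ∈ Finset.univ.erase js, c j * C j i0 := by
      intro t
      rw [← Finset.add_sum_erase _ _ (Finset.mem_univ js)]
      congr 1
      refine Finset.sum_congr rfl fun j hj => ?_
      have hj' : j ≠ js := Finset.ne_of_mem_erase hj
      rw [G0 (zt t) j (by rw [hzt]; simp [Function.update_of_ne hj'])]
    set S := ∑ j ∈ Finset.univ.erase js, c j * C j i0 with hS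
    by_cases hz : c js * G (zt 0) js + S ≠ 0
    · exact ⟨zt 0, by rw [hsum 0]; exact hz⟩
    · push_neg at hz
      refine ⟨zt 1, ?_⟩
      rw [hsum 1, hGt 1]
      rw [hGt 0] at hz
      simp only [zero_mul, mul_zero, zero_div, sub_zero] at hz
      have hne1 : (1 : ℝ) + B js i0 i0 ≠ 0 := by linarith
      intro hcon
      have : c js * (C js i0 - 1 * C js i0 * (1 * B js i0 i0) / (1 + 1 * (1 * B js i0 i0)))
          - c js * C js i0 = 0 := by linarith
      rw [one_mul, one_mul, one_mul] at this
      have : c js * (C js i0 * B js i0 i0 / (1 + B js i0 i0)) = 0 := by ring_nf at this ⊢; linarith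
      have h2 : C js i0 * B js i0 i0 / (1 + B js i0 i0) ≠ 0 := by
        apply div_ne_zero (mul_ne_zero hCjs (ne_of_gt hB00)) hne1
      exact (mul_ne_zero hcjs h2) this
  constructor
  · -- part (i)
    intro l hld hC U hU hne
    rcases Nat.eq_zero_or_pos l with hl0 | hl1
    · subst hl0
      have hC1 : ∑ k, b 1 k * C k i0 ≠ 0 := by
        intro h; exact hC (by rw [hPl 1 le_rfl]; exact h)
      have hA0 : A js js = 0 := hAjj0 hld
      have h0 : ∑ j, A js j * G 0 j ≠ 0 := by
        have heq : ∑ j, A js j * G 0 j = ∑ k, b 1 k * C k i0 := by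
          refine Finset.sum_congr rfl fun j _ => ?_
          rw [G0 0 j rfl, hb1 j]
          by_cases hj : j = js
          · subst hj; rw [hA0]; simp
          · simp [hj]
        rw [heq]; exact hC1
      obtain ⟨z, hzU, hz⟩ := main (A js) ⟨0, h0⟩ U hU hne
      refine ⟨z, hzU, ?_⟩
      intro hmem
      rw [hP0] at hmem
      exact hz hmem
    · have hC1 : ∑ k, b (l + 1) k * C k i0 ≠ 0 := by
        intro h; exact hC (by rw [hPl (l + 1) (by omega)]; exact h)
      have h0 : ∑ j, b (l + 1) j * G 0 j ≠ 0 := by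
        have heq : ∑ j, b (l + 1) j * G 0 j = ∑ k, b (l + 1) k * C k i0 :=
          Finset.sum_congr rfl fun j _ => by rw [G0 0 j rfl]
        rw [heq]; exact hC1
      obtain ⟨z, hzU, hz⟩ := main (b (l + 1)) ⟨0, h0⟩ U hU hne
      refine ⟨z, hzU, ?_⟩
      intro hmem
      rw [hPl l hl1] at hmem
      apply hz
      rw [← memfun z l hl1]
      exact hmem
  · -- part (ii)
    intro hC U hU hne
    have hCjs : C js i0 ≠ 0 := by intro h; exact hC (by rw [hP0]; exact h)
    rcases Nat.eq_zero_or_pos d with hd0 | hd1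
    · have hc : A js js ≠ 0 := by
        have h := hd; rw [hd0, pow_one] at h; exact ne_of_gt h
      obtain ⟨z0, h0⟩ := exist_z0 (A js) hc hCjs
      obtain ⟨z, hzU, hz⟩ := main (A js) ⟨z0, h0⟩ U hU hne
      refine ⟨z, hzU, ?_⟩
      rw [hd0, hP0]
      intro hmem
      exact hz hmem
    · have hA0 : A js js = 0 := hAjj0 hd1
      have hc : b (d + 1) js ≠ 0 := by
        rw [hbpow d js, hA0, zero_mul, sub_zero]; exact ne_of_gt hd
      obtain ⟨z0, h0⟩ := exist_z0 (b (d + 1)) hc hCjs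
      obtain ⟨z, hzU, hz⟩ := main (b (d + 1)) ⟨z0, h0⟩ U hU hne
      refine ⟨z, hzU, ?_⟩
      intro hmem
      rw [hPl d hd1] at hmem
      apply hz
      rw [← memfun z d hd1]
      exact hmem
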